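/- Let X be a Polish space and Y a standard Borel space. Let 𝒰 be a countable basis for the topology of X consisting of nonempty open sets, and let 𝒜 be a countable family of Borel subsets of Y that generates the Borel σ-algebra of Y. Then Σ(X,Y) is generated by the countable family of sets {[U, A] : U ∈ 𝒰, A ∈ 𝒜}. -/

import Mathlib

open Set Function Topology

namespace DescColor

/-- A set is *Baire measurable* if it differs from an open set by a meager set. -/
def BaireMSet {X : Type*} [TopologicalSpace X] (S : Set X) : Prop :=
  ∃ U : Set X, IsOpen U ∧ IsMeagre (symmDiff S U)

/-- A function is *Baire measurable* if preimages of measurable (Borel) sets are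
Baire measurable. -/
def BaireMFun {X Y : Type*} [TopologicalSpace X] [MeasurableSpace Y] (f : X → Y) : Prop :=
  ∀ B : Set Y, MeasurableSet B → BaireMSet (f ⁻¹' B)

variable {Γ : Type*}

/-- The shift action of `Γ` on colorings `Γ → ℕ`: `(γ · ω)(δ) = ω (δ γ)`. -/
def shift [Group Γ] (γ : Γ) (ω : Γ → ℕ) : Γ → ℕ := fun δ => ω (δ * γ)

/-- A subshift: a closed shift-invariant set of colorings. -/
def IsSubshift [Group Γ] (Ω : Set (Γ → ℕ)) : Prop :=
  IsClosed Ω ∧ ∀ (γ : Γ), ∀ ω ∈ Ω, shift γ ω ∈ Ω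

/-- The coding map `π_f(x)(γ) = f (γ • x)`. -/
def codingMap [Group Γ] {X : Type*} [MulAction Γ X] (f : X → ℕ) (x : X) : Γ → ℕ :=
  fun γ => f (γ • x)

/-- The action of `Γ` on `X` admits a Baire measurable `Ω`-coloring. -/
def HasBMColoring [Group Γ] (X : Type*) [TopologicalSpace X] [MulAction Γ X]
    (Ω : Set (Γ → ℕ)) : Prop :=
  ∃ f : X → ℕ, BaireMFun f ∧ {x : X | codingMap f x ∈ Ω} ∈ residual X

/-- The action of `Γ` on `X` is generically smooth. -/
def GenSmooth (Γ : Type*) [Group Γ] (X : Type*) [TopologicalSpace X] [MulAction Γ X] : Prop :=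
  ∃ f : X → ℝ, BaireMFun f ∧ ∀ x y : X, f x = f y ↔ ∃ γ : Γ, γ • x = y

/-- The shift action of `Γ` on `ℕ^Γ` admits a Baire measurable `Ω`-coloring. -/
def ShiftHasBMColoring (Γ : Type*) [Group Γ] (Ω : Set (Γ → ℕ)) : Prop :=
  ∃ f : (Γ → ℕ) → ℕ, BaireMFun f ∧
    {ω : Γ → ℕ | (fun γ : Γ => f (shift γ ω)) ∈ Ω} ∈ residual (Γ → ℕ)

/-- A free continuous action of `Γ` on a Polish space. -/
structure FreePolishAction (Γ : Type*) [Group Γ] where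
  X : Type
  ts : TopologicalSpace X
  polish : @PolishSpace X ts
  smul : Γ → X → X
  one_smul' : ∀ x, smul 1 x = x
  mul_smul' : ∀ γ δ x, smul (γ * δ) x = smul γ (smul δ x)
  cont : ∀ γ : Γ, @Continuous X X ts ts (smul γ)
  free : ∀ (γ : Γ) (x : X), smul γ x = x → γ = 1

/-- A free continuous action on a Polish space admits a Baire measurable `Ω`-coloring. -/
def FreePolishAction.HasBMCol [Group Γ] (α : FreePolishAction Γ) (Ω : Set (Γ → ℕ)) : Prop :=
  letI := α.ts
  ∃ f : α.X → ℕ, BaireMFun f ∧ {x : α.X | (fun γ : Γ => f (α.smul γ x)) ∈ Ω} ∈ residual α.X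

/-- A free continuous action on a Polish space is generically smooth. -/
def FreePolishAction.IsGenSmooth [Group Γ] (α : FreePolishAction Γ) : Prop :=
  letI := α.ts
  ∃ f : α.X → ℝ, BaireMFun f ∧ ∀ x y : α.X, f x = f y ↔ ∃ γ : Γ, α.smul γ x = y

/-- A subshift is *hard* if every free continuous action of `Γ` on a Polish space that
admits a Baire measurable `Ω`-coloring is generically smooth. -/
def Hard (Γ : Type*) [Group Γ] (Ω : Set (Γ → ℕ)) : Prop :=
  ∀ α : FreePolishAction Γ, α.HasBMCol Ω → α.IsGenSmooth

/-- A subshift is *easy* if every free continuous action of `Γ` on a Polish space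
admits a Baire measurable `Ω`-coloring. -/
def Easy (Γ : Type*) [Group Γ] (Ω : Set (Γ → ℕ)) : Prop :=
  ∀ α : FreePolishAction Γ, α.HasBMCol Ω

/-- Finite partial colorings of `Γ`: partial maps `Γ ⇀ ℕ` with finite domain. -/
abbrev FPC (Γ : Type*) : Type _ := {φ : Γ → Option ℕ // {γ : Γ | φ γ ≠ none}.Finite}

/-- The domain of a finite partial coloring. -/
def domP (φ : FPC Γ) : Set Γ := {γ : Γ | φ.1 γ ≠ none}

/-- `Fin(Ω)`: the set of finite partial colorings extending to an element of `Ω`. -/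
def FinOf (Ω : Set (Γ → ℕ)) : Set (FPC Γ) :=
  {φ | ∃ ω ∈ Ω, ∀ (γ : Γ) (c : ℕ), φ.1 γ = some c → ω γ = c}

/-- `g : FPC Γ → Bool` codes (the set `Fin(Ω)` of) the subshift `Ω`. -/
def CodesSubshift [Group Γ] (g : FPC Γ → Bool) (Ω : Set (Γ → ℕ)) : Prop :=
  IsSubshift Ω ∧ ∀ φ : FPC Γ, g φ = true ↔ φ ∈ FinOf Ω

/-- The shift action of `Γ` on finite partial colorings: `(γ · φ)(δ) = φ(δγ)`. -/
def shiftP [Group Γ] (γ : Γ) (φ : FPC Γ) : FPC Γ :=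
  ⟨fun δ => φ.1 (δ * γ), by
    apply (φ.2.image fun δ => δ * γ⁻¹).subset
    intro δ hδ
    exact ⟨δ * γ, hδ, by simp⟩⟩

/-- The empty partial coloring. -/
def emptyP (Γ : Type*) : FPC Γ := ⟨fun _ => none, by simp⟩

/-- The union (join) of two partial colorings (values of `φ` take precedence). -/
def joinP (φ ψ : FPC Γ) : FPC Γ :=
  ⟨fun δ => match φ.1 δ with | some c => some c | none => ψ.1 δ, by
    apply (φ.2.union ψ.2).subset
    intro δ hδ
    by_cases h : φ.1 δ = none
    · right
      simp only [mem_setOf_eq, h] at hδ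
      exact hδ
    · exact Or.inl h⟩

/-- The union of a finite list of partial colorings. -/
def joinList (l : List (FPC Γ)) : FPC Γ := l.foldr joinP (emptyP Γ)

/-- `φ[γ, r]`: the restriction of `φ` to the closed ball `B(γ, r)`. -/
noncomputable def restrictBall [MetricSpace Γ] (φ : FPC Γ) (γ : Γ) (r : ℝ) : FPC Γ :=
  ⟨fun δ => if dist γ δ ≤ r then φ.1 δ else none, by
    apply φ.2.subset
    intro δ hδ
    by_cases h : dist γ δ ≤ r
    · simp only [mem_setOf_eq, if_pos h] at hδ
      exact hδ
    · simp only [mem_setOf_eq, if_neg h] at hδ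
      exact absurd rfl hδ⟩

/-- `φ ∪ {(γ, c)}`. -/
def insertP [DecidableEq Γ] (φ : FPC Γ) (γ : Γ) (c : ℕ) : FPC Γ :=
  ⟨fun δ => if δ = γ then some c else φ.1 δ, by
    apply (φ.2.insert γ).subset
    intro δ hδ
    by_cases h : δ = γ
    · exact Or.inl h
    · right
      simp only [mem_setOf_eq, if_neg h] at hδ
      exact hδ⟩

/-- The restriction of a total coloring `ω` to a finite set `S`. -/
def restrictTo [DecidableEq Γ] (ω : Γ → ℕ) (S : Finset Γ) : FPC Γ :=
  ⟨fun δ => if δ ∈ S then some (ω δ) else none, by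
    apply S.finite_toSet.subset
    intro δ hδ
    by_cases h : δ ∈ S
    · exact h
    · simp only [mem_setOf_eq, if_neg h] at hδ
      exact absurd rfl hδ⟩

/-- Post-composition of a partial coloring with `ρ : ℕ → ℕ`. -/
def mapP (ρ : ℕ → ℕ) (φ : FPC Γ) : FPC Γ :=
  ⟨fun δ => (φ.1 δ).map ρ, by
    apply φ.2.subset
    intro δ hδ
    intro h
    simp only [mem_setOf_eq, h] at hδ
    exact hδ rfl⟩

/-- `ψ` is a restriction of `φ`. -/
def IsRestrictionOf (ψ φ : FPC Γ) : Prop := ∀ δ : Γ, ψ.1 δ = none ∨ ψ.1 δ = φ.1 δ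

/-- A `Γ`-ideal: a shift-invariant set of finite partial colorings closed under
restrictions. -/
def IsGammaIdeal [Group Γ] (P : Set (FPC Γ)) : Prop :=
  (∀ (γ : Γ), ∀ φ ∈ P, shiftP γ φ ∈ P) ∧
  (∀ φ ∈ P, ∀ ψ : FPC Γ, IsRestrictionOf ψ φ → ψ ∈ P)

/-- An extendable `Γ`-ideal. -/
def IsExtendable [DecidableEq Γ] (P : Set (FPC Γ)) : Prop :=
  ∀ φ ∈ P, ∀ γ : Γ, φ.1 γ = none → ∃ c : ℕ, insertP φ γ c ∈ P

/-- `φ` and `ψ` are `R`-separated: `dist(dom φ, dom ψ) > R φ + R ψ`. -/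
def RSeparated [MetricSpace Γ] (R : FPC Γ → ℝ) (φ ψ : FPC Γ) : Prop :=
  ∀ γ ∈ domP φ, ∀ δ ∈ domP ψ, R φ + R ψ < dist γ δ

/-- The join property of a `Γ`-ideal `P`. -/
def HasJoinProperty [Group Γ] [MetricSpace Γ] (P : Set (FPC Γ)) : Prop :=
  ∃ R : FPC Γ → ℝ, (∀ φ, 0 ≤ R φ) ∧ (∀ (γ : Γ), ∀ φ ∈ P, R (shiftP γ φ) = R φ) ∧
    ∀ l : List (FPC Γ), (∀ φ ∈ l, φ ∈ P) → l.Pairwise (RSeparated R) → joinList l ∈ P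

/-- `P^loc_r`: partial colorings that are `r`-locally in `P`. -/
def LocallyIn [MetricSpace Γ] (P : Set (FPC Γ)) (r : ℕ → ℝ) : Set (FPC Γ) :=
  {φ | ∀ (γ : Γ) (c : ℕ), φ.1 γ = some c → restrictBall φ γ (r c) ∈ P}

/-- A local `Γ`-ideal. -/
def IsLocal [MetricSpace Γ] (P : Set (FPC Γ)) : Prop :=
  ∃ r : ℕ → ℝ, (∀ c, 0 ≤ r c) ∧ P = LocallyIn P r

/-- `Col(P)`: colorings all of whose finite restrictions lie in `P`. -/
def ColOf [DecidableEq Γ] (P : Set (FPC Γ)) : Set (Γ → ℕ) :=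
  {ω | ∀ S : Finset Γ, restrictTo ω S ∈ P}

/-! ### The space of Baire measurable functions -/

/-- Baire measurable functions from `X` to `Y`. -/
abbrev BMFunSub (X Y : Type*) [TopologicalSpace X] [MeasurableSpace Y] :=
  {f : X → Y // BaireMFun f}

/-- Equality on a comeager set. -/
def BFunRel {X Y : Type*} [TopologicalSpace X] [MeasurableSpace Y]
    (f g : BMFunSub X Y) : Prop := {x : X | f.1 x = g.1 x} ∈ residual X

/-- `B(X,Y)`: Baire measurable functions modulo equality on a comeager set. -/
abbrev BFun (X Y : Type*) [TopologicalSpace X] [MeasurableSpace Y] :=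
  Quot (BFunRel (X := X) (Y := Y))

/-- `[U, A]`: the classes of functions `f` with `U ∖ f⁻¹(A)` meager. -/
def forceSet {X Y : Type*} [TopologicalSpace X] [MeasurableSpace Y]
    (U : Set X) (A : Set Y) : Set (BFun X Y) :=
  {F | ∃ f : BMFunSub X Y, Quot.mk BFunRel f = F ∧ IsMeagre (U \ f.1 ⁻¹' A)}

/-- `Σ(X,Y)`: the σ-algebra generated by the sets `[U, A]` for `U` nonempty open
and `A` Borel. -/
def SigmaXY (X Y : Type*) [TopologicalSpace X] [MeasurableSpace Y] :
    MeasurableSpace (BFun X Y) :=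
  MeasurableSpace.generateFrom
    {S | ∃ (U : Set X) (A : Set Y), IsOpen U ∧ U.Nonempty ∧ MeasurableSet A ∧ S = forceSet U A}

section AuxSigma

variable {X Y : Type*} [TopologicalSpace X] [MeasurableSpace Y]

private lemma bfunRel_symm {f g : BMFunSub X Y} (h : BFunRel f g) : BFunRel g f :=
  Filter.mem_of_superset h fun _ hx => Eq.symm hx

private lemma forceSet_resp (U : Set X) (A : Set Y) {f g : BMFunSub X Y}
    (h : BFunRel f g) (hm : IsMeagre (U \ f.1 ⁻¹' A)) : IsMeagre (U \ g.1 ⁻¹' A) := by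
  have hE : IsMeagre {x | f.1 x = g.1 x}ᶜ := by
    rw [IsMeagre, compl_compl]; exact h
  have hun : IsMeagre ((U \ f.1 ⁻¹' A) ∪ {x | f.1 x = g.1 x}ᶜ) := by
    rw [IsMeagre, compl_union]
    exact Filter.inter_mem hm hE
  refine hun.mono ?_
  intro x hx
  by_cases he : f.1 x = g.1 x
  · exact Or.inl ⟨hx.1, fun hfa => hx.2 (by rw [mem_preimage] at hfa ⊢; rwa [← he])⟩
  · exact Or.inr he

private def forceProp (U : Set X) (A : Set Y) : BFun X Y → Prop :=
  Quot.lift (fun f : BMFunSub X Y => IsMeagre (U \ f.1 ⁻¹' A))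
    (fun _ _ h => propext ⟨forceSet_resp U A h, forceSet_resp U A (bfunRel_symm h)⟩)

private lemma mem_forceSet (U : Set X) (A : Set Y) (f : BMFunSub X Y) :
    Quot.mk BFunRel f ∈ forceSet U A ↔ IsMeagre (U \ f.1 ⁻¹' A) := by
  constructor
  · rintro ⟨g, hg, hm⟩
    have h := congrArg (forceProp U A) hg
    exact cast h hm
  · exact fun h => ⟨f, rfl, h⟩

private lemma isMeagre_biUnion {ι : Type*} {S : Set ι} (hc : S.Countable) {s : ι → Set X}
    (h : ∀ i ∈ S, IsMeagre (s i)) : IsMeagre (⋃ i ∈ S, s i) := by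
  rw [IsMeagre, compl_iUnion₂]
  exact (countable_bInter_mem hc).mpr h

private lemma forceSet_univ (U : Set X) : forceSet U (univ : Set Y) = univ := by
  ext F
  induction F using Quot.ind with
  | _ f =>
    simp only [mem_univ, iff_true, mem_forceSet, preimage_univ, diff_univ]
    exact IsMeagre.empty

private lemma forceSet_iInter (U : Set X) (A : ℕ → Set Y) :
    forceSet U (⋂ n, A n) = ⋂ n, forceSet U (A n) := by
  ext F
  induction F using Quot.ind with
  | _ f =>
    simp only [mem_iInter, mem_forceSet]
    have hEq : U \ f.1 ⁻¹' (⋂ n, A n) = ⋃ n, U \ f.1 ⁻¹' (A n) := by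
      rw [preimage_iInter, diff_iInter]
    rw [hEq]
    constructor
    · exact fun h n => h.mono (subset_iUnion (fun n => U \ f.1 ⁻¹' A n) n)
    · exact fun h => isMeagre_iUnion h

private lemma forceSet_biInter_basis {𝒰 : Set (Set X)} (h𝒰c : 𝒰.Countable)
    (h𝒰b : TopologicalSpace.IsTopologicalBasis 𝒰) {U : Set X} (hU : IsOpen U) (A : Set Y) :
    forceSet U A = ⋂ V ∈ {V | V ∈ 𝒰 ∧ V ⊆ U}, forceSet V A := by
  ext F
  induction F using Quot.ind with
  | _ f =>
    simp only [mem_iInter₂, mem_setOf_eq, mem_forceSet]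
    constructor
    · rintro h V ⟨_, hVU⟩
      exact h.mono (diff_subset_diff_left hVU)
    · intro h
      obtain ⟨S, hS𝒰, rfl⟩ := h𝒰b.open_eq_sUnion hU
      have hEq : ⋃₀ S \ f.1 ⁻¹' A = ⋃ V ∈ S, (V \ f.1 ⁻¹' A) := by
        rw [sUnion_eq_biUnion]
        ext x; simp only [mem_diff, mem_iUnion]; tauto
      rw [hEq]
      exact isMeagre_biUnion (h𝒰c.mono hS𝒰)
        (fun V hV => h V ⟨hS𝒰 hV, subset_sUnion_of_mem hV⟩)

private lemma forceSet_compl_eq [BaireSpace X] {𝒰 : Set (Set X)}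
    (h𝒰b : TopologicalSpace.IsTopologicalBasis 𝒰) (h𝒰ne : ∀ U ∈ 𝒰, U.Nonempty)
    {U : Set X} (hU : IsOpen U) {A : Set Y} (hA : MeasurableSet A) :
    forceSet U Aᶜ = (⋃ V ∈ {V | V ∈ 𝒰 ∧ V ⊆ U}, forceSet V A)ᶜ := by
  ext F
  induction F using Quot.ind with
  | _ f =>
    simp only [mem_compl_iff, mem_iUnion₂, mem_setOf_eq, mem_forceSet, not_exists]
    have hEq : U \ f.1 ⁻¹' Aᶜ = U ∩ f.1 ⁻¹' A := by
      rw [preimage_compl, diff_compl]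
    rw [hEq]
    constructor
    · intro hm V hV hVm
      have hVo : IsOpen V := h𝒰b.isOpen hV.1
      have hVmea : IsMeagre V := by
        refine ((by rw [IsMeagre, compl_union]; exact Filter.inter_mem hm hVm :
          IsMeagre ((U ∩ f.1 ⁻¹' A) ∪ (V \ f.1 ⁻¹' A)))).mono ?_
        intro x hx
        by_cases hxA : x ∈ f.1 ⁻¹' A
        · exact Or.inl ⟨hV.2 hx, hxA⟩
        · exact Or.inr ⟨hx, hxA⟩
      have hd : Dense Vᶜ := dense_of_mem_residual hVmea
      obtain ⟨x, hx1, hx2⟩ := hd.inter_open_nonempty V hVo (h𝒰ne V hV.1)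
      exact hx2 hx1
    · intro h
      obtain ⟨W, hWopen, hWm⟩ := f.2 A hA
      have hsd : IsMeagre (f.1 ⁻¹' A \ W ∪ W \ f.1 ⁻¹' A) := by
        rwa [← Set.symmDiff_def]
      have hUW : U ∩ W = ∅ := by
        by_contra hne
        obtain ⟨x, hx⟩ := nonempty_iff_ne_empty.mpr hne
        obtain ⟨V, hV𝒰, _, hVsub⟩ :=
          h𝒰b.exists_subset_of_mem_open hx (hU.inter hWopen)
        refine h V ⟨hV𝒰, hVsub.trans inter_subset_left⟩ (hsd.mono ?_)
        intro y hy
        exact Or.inr ⟨(hVsub hy.1).2, hy.2⟩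
      refine hsd.mono ?_
      intro x hx
      have hxW : x ∉ W := fun hxW => by
        have : x ∈ U ∩ W := ⟨hx.1, hxW⟩
        rw [hUW] at this
        exact this
      exact Or.inl ⟨hx.2, hxW⟩

end AuxSigma

/-- `Σ(X,Y)` is generated by the sets `[U, A]` with `U` in a countable basis of nonempty
open sets and `A` in a countable generating family of Borel sets. -/
theorem stmt5 (X Y : Type*) [TopologicalSpace X] [PolishSpace X]
    [mY : MeasurableSpace Y] [StandardBorelSpace Y]
    (𝒰 : Set (Set X)) (h𝒰c : 𝒰.Countable)
    (h𝒰b : TopologicalSpace.IsTopologicalBasis 𝒰)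
    (h𝒰ne : ∀ U ∈ 𝒰, U.Nonempty)
    (𝒜 : Set (Set Y)) (h𝒜c : 𝒜.Countable)
    (h𝒜gen : MeasurableSpace.generateFrom 𝒜 = mY) :
    SigmaXY X Y =
      MeasurableSpace.generateFrom {S | ∃ U ∈ 𝒰, ∃ A ∈ 𝒜, S = forceSet U A} := by
  have hBaire : BaireSpace X := by
    letI := TopologicalSpace.upgradeIsCompletelyMetrizable X
    infer_instance
  set G : MeasurableSpace (BFun X Y) :=
    MeasurableSpace.generateFrom {S | ∃ U ∈ 𝒰, ∃ A ∈ 𝒜, S = forceSet U A} with hG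
  -- the "good sets" predicate
  set pred : Set Y → Prop :=
    fun A => @MeasurableSet Y mY A ∧ ∀ U ∈ 𝒰, @MeasurableSet _ G (forceSet U A) with hpred
  have huniv : pred univ := by
    refine ⟨MeasurableSet.univ, fun U _ => ?_⟩
    rw [forceSet_univ]
    exact MeasurableSet.univ
  have hcompl : ∀ A : Set Y, pred A → pred Aᶜ := by
    rintro A ⟨hA, h⟩
    refine ⟨hA.compl, fun U hU => ?_⟩
    rw [forceSet_compl_eq h𝒰b h𝒰ne (h𝒰b.isOpen hU) hA]
    refine (MeasurableSet.biUnion (h𝒰c.mono fun V hV => hV.1) ?_).compl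
    exact fun V hV => h V hV.1
  have hiUnion : ∀ A : ℕ → Set Y, (∀ n, pred (A n)) → pred (⋃ n, A n) := by
    intro A h
    have hEq : (⋃ n, A n) = (⋂ n, (A n)ᶜ)ᶜ := by
      rw [compl_iInter]
      simp only [compl_compl]
    rw [hEq]
    refine hcompl _ ⟨MeasurableSet.iInter fun n => (h n).1.compl, fun U hU => ?_⟩
    rw [forceSet_iInter]
    exact MeasurableSet.iInter fun n => (hcompl _ (h n)).2 U hU
  let m : MeasurableSpace Y :=
    { MeasurableSet' := pred
      measurableSet_empty := by
        rw [← compl_univ]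
        exact hcompl _ huniv
      measurableSet_compl := hcompl
      measurableSet_iUnion := hiUnion }
  have hle : mY ≤ m := by
    rw [← h𝒜gen]
    refine MeasurableSpace.generateFrom_le fun A hA => ?_
    refine ⟨by rw [← h𝒜gen]; exact MeasurableSpace.measurableSet_generateFrom hA,
      fun U hU => ?_⟩
    exact MeasurableSpace.measurableSet_generateFrom ⟨U, hU, A, hA, rfl⟩
  have key : ∀ A : Set Y, @MeasurableSet Y mY A → ∀ U ∈ 𝒰,
      @MeasurableSet _ G (@forceSet X Y _ mY U A) := by
    intro A hA
    have h2 : @MeasurableSet Y m A := hle A hA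
    exact h2.2
  clear hle
  clear m
  refine le_antisymm ?_ ?_
  · refine MeasurableSpace.generateFrom_le ?_
    rintro S ⟨U, A, hUo, _, hA, rfl⟩
    rw [forceSet_biInter_basis h𝒰c h𝒰b hUo A]
    exact MeasurableSet.biInter (h𝒰c.mono fun V hV => hV.1)
      (fun V hV => key A hA V hV.1)
  · refine MeasurableSpace.generateFrom_le ?_
    rintro S ⟨U, hU, A, hA, rfl⟩
    refine MeasurableSpace.measurableSet_generateFrom
      ⟨U, A, h𝒰b.isOpen hU, h𝒰ne U hU, ?_, rfl⟩
    rw [← h𝒜gen]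
    exact MeasurableSpace.measurableSet_generateFrom hA

end DescColor
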